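/- Let X, Y, W : 𝔻 → ℂ be holomorphic on the open unit disk with W' = −Y·X', 1 < |X(z)| < 2 and |Y(z)| < 1/3 for all z ∈ 𝔻, and assume the metric dσ² = |dX|² + |dY|² is complete, i.e., every divergent C¹ path γ : [0,∞) → 𝔻 satisfies ∫₀^∞ √(|X'(γ(t))|² + |Y'(γ(t))|²)·|γ'(t)| dt = ∞. Then for every divergent C¹ path γ : [0,∞) → 𝔻 along which both |e^{−W(γ(t))}| and |(1 + X(γ(t))Y(γ(t)))·e^{W(γ(t))}| are bounded above, one has ∫₀^∞ √(|e^{−2W(γ(t))} X'(γ(t))|² + |e^{2W(γ(t))}(Y'(γ(t)) − Y(γ(t))² X'(γ(t)))|²)·|γ'(t)| dt = ∞. -/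

import Mathlib

open MeasureTheory

/-- A `C¹` path in the unit disk is divergent if it eventually leaves every compact
subset of the disk. -/
def IsDivergentPath (γ : ℝ → ℂ) : Prop :=
  ContDiff ℝ 1 γ ∧ (∀ t : ℝ, γ t ∈ Metric.ball (0 : ℂ) 1) ∧
    ∀ K : Set ℂ, IsCompact K → K ⊆ Metric.ball (0 : ℂ) 1 →
      ∃ T : ℝ, ∀ t ≥ T, γ t ∉ K

private lemma sqrt_comp' (A B D : ℝ) (hB : 0 ≤ B)
    (h : B ≤ D + (1/9) * A) :
    Real.sqrt (A^2 + B^2) ≤ 2 * Real.sqrt (A^2 + D^2) := by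
  have hB2 : B^2 ≤ (D + 1/9*A)^2 := by nlinarith
  have h1 : A^2 + B^2 ≤ 4 * (A^2 + D^2) := by nlinarith [sq_nonneg (A - D), sq_nonneg (A + D)]
  calc Real.sqrt (A^2+B^2) ≤ Real.sqrt (4*(A^2+D^2)) := Real.sqrt_le_sqrt h1
    _ = 2 * Real.sqrt (A^2+D^2) := by
        rw [show (4:ℝ) = 2^2 by norm_num, Real.sqrt_mul (by positivity),
          Real.sqrt_sq (by norm_num)]

private lemma sqrt_scale' (c A D p q : ℝ) (hc : 0 ≤ c)
    (hp : c ≤ p) (hq : c ≤ q) :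
    c * Real.sqrt (A^2 + D^2) ≤ Real.sqrt (p^2 * A^2 + q^2 * D^2) := by
  have hcp : c^2 ≤ p^2 := by nlinarith
  have hcq : c^2 ≤ q^2 := by nlinarith
  have : c * Real.sqrt (A^2+D^2) = Real.sqrt (c^2 * (A^2+D^2)) := by
    rw [Real.sqrt_mul (by positivity), Real.sqrt_sq hc]
  rw [this]
  refine Real.sqrt_le_sqrt ?_
  nlinarith [sq_nonneg A, sq_nonneg D]

private lemma abs_exp_neg_two' (w : ℂ) :
    ‖Complex.exp (-(2*w))‖ = ((Real.exp w.re)⁻¹)^2 := by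
  rw [Complex.norm_exp]
  simp [Complex.mul_re]
  rw [show -(2*w.re) = -w.re + -w.re by ring, Real.exp_add, Real.exp_neg, sq, mul_inv]

private lemma abs_exp_two' (w : ℂ) :
    ‖Complex.exp (2*w)‖ = (Real.exp w.re)^2 := by
  rw [Complex.norm_exp]
  simp [Complex.mul_re]
  rw [show 2*w.re = w.re + w.re by ring, Real.exp_add, sq]

private lemma abs_exp_neg' (w : ℂ) :
    ‖Complex.exp (-w)‖ = (Real.exp w.re)⁻¹ := by
  rw [Complex.norm_exp]
  simp [Real.exp_neg]

/-- Main case of Proposition 2.4: if `X, Y, W` are holomorphic on the unit disk with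
`W' = −Y·X'`, `1 < |X| < 2`, `|Y| < 1/3`, and the metric `|dX|² + |dY|²` is complete,
then every divergent `C¹` path along which `|e^{−W}|` and `|(1+XY)e^{W}|` stay bounded
has infinite length in the lift metric `|e^{−2W}dX|² + |e^{2W}(dY − Y²dX)|²`. -/
theorem lift_metric_infinite_length_on_bounded_paths (X Y W : ℂ → ℂ)
    (hX : ∀ z ∈ Metric.ball (0 : ℂ) 1, DifferentiableAt ℂ X z)
    (hY : ∀ z ∈ Metric.ball (0 : ℂ) 1, DifferentiableAt ℂ Y z)
    (hW : ∀ z ∈ Metric.ball (0 : ℂ) 1, DifferentiableAt ℂ W z)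
    (hLeg : ∀ z ∈ Metric.ball (0 : ℂ) 1, deriv W z = -(Y z * deriv X z))
    (hXbd : ∀ z ∈ Metric.ball (0 : ℂ) 1,
      1 < ‖X z‖ ∧ ‖X z‖ < 2)
    (hYbd : ∀ z ∈ Metric.ball (0 : ℂ) 1, ‖Y z‖ < 1 / 3)
    (hσcomplete : ∀ γ : ℝ → ℂ, IsDivergentPath γ →
      ∫⁻ t in Set.Ici (0 : ℝ), ENNReal.ofReal
          (Real.sqrt (‖deriv X (γ t)‖ ^ 2 + ‖deriv Y (γ t)‖ ^ 2) *
            ‖deriv γ t‖) = ⊤) :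
    ∀ γ : ℝ → ℂ, IsDivergentPath γ →
      (∃ m : ℝ, ∀ t : ℝ, 0 ≤ t →
        ‖Complex.exp (-W (γ t))‖ ≤ m ∧
        ‖(1 + X (γ t) * Y (γ t)) * Complex.exp (W (γ t))‖ ≤ m) →
      ∫⁻ t in Set.Ici (0 : ℝ), ENNReal.ofReal
          (Real.sqrt
            (‖Complex.exp (-(2 * W (γ t))) * deriv X (γ t)‖ ^ 2 +
              ‖Complex.exp (2 * W (γ t)) *
                (deriv Y (γ t) - Y (γ t) ^ 2 * deriv X (γ t))‖ ^ 2) *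
            ‖deriv γ t‖) = ⊤ := by
  rintro γ hγ ⟨m, hm⟩
  obtain ⟨hγC1, hγball, hγdiv⟩ := hγ
  -- `m` is positive
  have hm0 : 0 < m := by
    have h0 := (hm 0 le_rfl).1
    have : 0 < ‖Complex.exp (-W (γ 0))‖ :=
      norm_pos_iff.mpr (Complex.exp_ne_zero _)
    linarith
  set c : ℝ := ((3*m)^2)⁻¹ / 2 with hc
  have hcpos : 0 < c := by positivity
  -- the key pointwise estimate
  have key : ∀ t ∈ Set.Ici (0:ℝ),
      ENNReal.ofReal c * ENNReal.ofReal
          (Real.sqrt (‖deriv X (γ t)‖ ^ 2 + ‖deriv Y (γ t)‖ ^ 2) *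
            ‖deriv γ t‖)
        ≤ ENNReal.ofReal
          (Real.sqrt
            (‖Complex.exp (-(2 * W (γ t))) * deriv X (γ t)‖ ^ 2 +
              ‖Complex.exp (2 * W (γ t)) *
                (deriv Y (γ t) - Y (γ t) ^ 2 * deriv X (γ t))‖ ^ 2) *
            ‖deriv γ t‖) := by
    intro t ht
    have hz : γ t ∈ Metric.ball (0 : ℂ) 1 := hγball t
    set z := γ t
    set A := ‖deriv X z‖ with hA
    set B := ‖deriv Y z‖ with hB
    set D := ‖deriv Y z - Y z ^ 2 * deriv X z‖ with hD
    set a := Real.exp ((W z).re) with ha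
    have ha0 : 0 < a := Real.exp_pos _
    -- bounds on `a` from the boundedness hypothesis
    obtain ⟨h1, h2⟩ := hm t ht
    rw [abs_exp_neg'] at h1
    have hXY : (1:ℝ)/3 ≤ ‖1 + X z * Y z‖ := by
      have htri : ‖(1 + X z * Y z) + -(X z * Y z)‖ ≤
          ‖1 + X z * Y z‖ + ‖-(X z * Y z)‖ :=
        norm_add_le _ _
      simp only [add_neg_cancel_right, norm_neg, norm_one, norm_mul] at htri
      have hx2 := (hXbd z hz).2
      have hy3 := hYbd z hz
      have hx0 : 0 ≤ ‖X z‖ := norm_nonneg _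
      have hy0 : 0 ≤ ‖Y z‖ := norm_nonneg _
      nlinarith
    have h2' : ‖1 + X z * Y z‖ * a ≤ m := by
      rw [norm_mul, Complex.norm_exp] at h2; exact h2
    have haub : a ≤ 3 * m := by nlinarith
    have hainv : a⁻¹ ≤ m := h1
    have halb : m⁻¹ ≤ a := by rwa [inv_le_comm₀ ha0 hm0] at hainv
    -- the conformal factors
    set p := ‖Complex.exp (-(2 * W z))‖ with hp
    set q := ‖Complex.exp (2 * W z)‖ with hq
    have hpeq : p = (a⁻¹)^2 := abs_exp_neg_two' (W z)
    have hqeq : q = a^2 := abs_exp_two' (W z)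
    set c₁ : ℝ := ((3*m)^2)⁻¹ with hc₁
    have hc₁0 : 0 < c₁ := by positivity
    have hple : c₁ ≤ p := by
      rw [hpeq, hc₁, inv_pow]
      exact inv_anti₀ (by positivity) (by nlinarith)
    have hqle : c₁ ≤ q := by
      rw [hqeq, hc₁]
      have h9 : ((3*m)^2)⁻¹ ≤ (m⁻¹)^2 := by
        rw [inv_pow]
        exact inv_anti₀ (by positivity) (by nlinarith)
      have : (m⁻¹)^2 ≤ a^2 := by
        have := pow_le_pow_left₀ (by positivity) halb 2
        simpa using this
      linarith
    -- `B ≤ D + A/9`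
    have hBD : B ≤ D + (1/9) * A := by
      have htri : ‖(deriv Y z - Y z^2 * deriv X z) + Y z^2 * deriv X z‖ ≤
          D + ‖Y z^2 * deriv X z‖ := norm_add_le _ _
      simp only [sub_add_cancel] at htri
      rw [norm_mul, norm_pow] at htri
      have hy3 := hYbd z hz
      have hy0 : 0 ≤ ‖Y z‖ := norm_nonneg _
      have hA0' : 0 ≤ ‖deriv X z‖ := norm_nonneg _
      have h9 : ‖Y z‖^2 ≤ 1/9 := by nlinarith
      have h9' := mul_le_mul_of_nonneg_right h9 hA0'
      simp only [hA, hB, hD]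
      linarith
    -- combine
    have hA0 : 0 ≤ A := norm_nonneg _
    have hB0 : 0 ≤ B := norm_nonneg _
    have hD0 : 0 ≤ D := norm_nonneg _
    have hmain : c * Real.sqrt (A^2 + B^2) ≤ Real.sqrt (p^2 * A^2 + q^2 * D^2) := by
      calc c * Real.sqrt (A^2 + B^2) ≤ c * (2 * Real.sqrt (A^2 + D^2)) := by
            have := sqrt_comp' A B D hB0 hBD
            nlinarith
        _ = c₁ * Real.sqrt (A^2 + D^2) := by rw [hc, hc₁]; ring
        _ ≤ Real.sqrt (p^2 * A^2 + q^2 * D^2) :=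
            sqrt_scale' c₁ A D p q (le_of_lt hc₁0) hple hqle
    have hng : (0:ℝ) ≤ ‖deriv γ t‖ := norm_nonneg _
    rw [← ENNReal.ofReal_mul (le_of_lt hcpos)]
    apply ENNReal.ofReal_le_ofReal
    rw [norm_mul, norm_mul]
    calc c * (Real.sqrt (A^2 + B^2) * ‖deriv γ t‖)
        = (c * Real.sqrt (A^2 + B^2)) * ‖deriv γ t‖ := by ring
      _ ≤ Real.sqrt (p^2 * A^2 + q^2 * D^2) * ‖deriv γ t‖ :=
          mul_le_mul_of_nonneg_right hmain hng
      _ = Real.sqrt ((p * A)^2 + (q * D)^2) * ‖deriv γ t‖ := by ring_nf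
  -- integrate the pointwise estimate
  have hmono := lintegral_mono_ae (μ := volume.restrict (Set.Ici (0:ℝ)))
    (ae_restrict_of_forall_mem measurableSet_Ici key)
  rw [lintegral_const_mul' _ _ ENNReal.ofReal_ne_top,
    hσcomplete γ ⟨hγC1, hγball, hγdiv⟩] at hmono
  have hcne : ENNReal.ofReal c ≠ 0 := by
    simp [ENNReal.ofReal_eq_zero, not_le, hcpos]
  rw [ENNReal.mul_top hcne] at hmono
  exact top_le_iff.mp hmono
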